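/- arXiv:2602.18316 — 4 statements merged into one kernel-verified Lean document; each statement's English description precedes it below -/
import Mathlib

section
/- If a sequence {a_i}_{i=1,...,n} of real numbers satisfies that every triple (a_i, a_j, a_k) with i < j < k has type T1 (i.e. 0 ≤ a_j - a_i ≤ a_k - a_j), then the shifted sequence {a_i - a_1}_{i=1,...,n} is exponential, i.e. 0 ≤ 2(a_i - a_1) ≤ a_{i+1} - a_1 for all 2 ≤ i ≤ n-1 (indices where both terms are defined). -/
/-- If every triple of a sequence has type T1, the shifted sequence is exponential. -/
theorem stmt_1 (n : ℕ) (a : ℕ → ℝ)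
    (h : ∀ i j k : ℕ, 1 ≤ i → i < j → j < k → k ≤ n →
      0 ≤ a j - a i ∧ a j - a i ≤ a k - a j) :
    ∀ i : ℕ, 2 ≤ i → i + 1 ≤ n →
      0 ≤ 2 * (a i - a 1) ∧ 2 * (a i - a 1) ≤ a (i + 1) - a 1 := by
  intro i hi hin
  obtain ⟨h1, h2⟩ := h 1 i (i + 1) le_rfl (by omega) (by omega) hin
  constructor <;> linarith
end

section
/- Let r, s, q be positive integers and let H be the complete r-uniform hypergraph on N vertices with a labeling γ : E(H) → ℝ^s such that for every edge f, there are at most q edges f' with |f ∩ f'| = r-1 and |γ(f)_i - γ(f')_i| < 1 for some i ∈ [s]. Then there exists a subset of vertices of size at least c·N^{1/(2r-1)} (where c > 0 depends only on r, s, q) on which the induced complete hypergraph H' satisfies |γ(f)_i - γ(f')_i| ≥ 1 for every distinct pair of edges f, f' of H' and every i ∈ [s]. -/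
open Finset

attribute [local instance] Classical.propDecidable

section helpers

variable {r s q N : ℕ} {γ : Finset (Fin N) → Fin s → ℝ}

lemma sup_count {N : ℕ} (T : Finset (Fin N)) (j : ℕ) :
    #{S ∈ (univ : Finset (Fin N)).powersetCard j | T ⊆ S}
      ≤ (N - T.card).choose (j - T.card) := by
  classical
  have h := Finset.card_le_card_of_injOn (fun S => S \ T)
    (s := {S ∈ (univ : Finset (Fin N)).powersetCard j | T ⊆ S})
    (t := ((univ : Finset (Fin N)) \ T).powersetCard (j - T.card)) ?_ ?_
  · refine h.trans ?_
    rw [Finset.card_powersetCard, Finset.card_sdiff_of_subset (Finset.subset_univ T), Finset.card_univ,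
      Fintype.card_fin]
  · intro S hS
    simp only [Finset.mem_coe, Finset.mem_filter, Finset.mem_powersetCard] at hS ⊢
    obtain ⟨⟨_, hcard⟩, hT⟩ := hS
    exact ⟨Finset.sdiff_subset_sdiff (Finset.subset_univ S) le_rfl,
      by rw [Finset.card_sdiff_of_subset hT, hcard]⟩
  · intro S hS S' hS' h
    simp only [Finset.coe_filter, Set.mem_setOf_eq, Finset.mem_powersetCard] at hS hS'
    have h2 : S \ T = S' \ T := h
    have : S \ T ∪ T = S' \ T ∪ T := by rw [h2]
    rwa [Finset.sdiff_union_of_subset hS.2, Finset.sdiff_union_of_subset hS'.2] at this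

lemma choose_pow {k m N : ℕ} (hk : k ≤ m) (hm : m ≤ N) :
    (N - k).choose (m - k) * N ^ k ≤ N.choose m * m ^ k := by
  induction k with
  | zero => simp
  | succ k ih =>
      have hk' : k ≤ m := Nat.le_of_succ_le hk
      obtain ⟨a, ha⟩ : ∃ a, N = a + 1 + k := ⟨N - (k+1), by omega⟩
      obtain ⟨b, hb⟩ : ∃ b, m = b + 1 + k := ⟨m - (k+1), by omega⟩
      have eN1 : N - (k+1) = a := by omega
      have eN2 : N - k = a + 1 := by omega
      have eM1 : m - (k+1) = b := by omega
      have eM2 : m - k = b + 1 := by omega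
      have hs : (a+1) * a.choose b = (a+1).choose (b+1) * (b+1) :=
        Nat.add_one_mul_choose_eq a b
      have hmono : a.choose b ≤ (a+1).choose (b+1) := by
        rw [Nat.choose_succ_succ]; exact Nat.le_add_right _ _
      have step : N * a.choose b ≤ m * (a+1).choose (b+1) := by nlinarith [hs, hmono]
      calc (N - (k+1)).choose (m - (k+1)) * N ^ (k+1)
          = (N * a.choose b) * N ^ k := by rw [eN1, eM1]; ring
        _ ≤ (m * (a+1).choose (b+1)) * N ^ k := Nat.mul_le_mul_right _ step
        _ = m * ((N - k).choose (m - k) * N ^ k) := by rw [eN2, eM2]; ring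
        _ ≤ m * (N.choose m * m ^ k) := Nat.mul_le_mul_left _ (ih hk')
        _ = N.choose m * m ^ (k+1) := by ring

lemma window
    (HH : ∀ f : Finset (Fin N), f.card = r →
      ({f' : Finset (Fin N) | f'.card = r ∧ (f ∩ f').card = r - 1 ∧
          ∃ i : Fin s, |γ f i - γ f' i| < 1}).ncard ≤ q)
    (i : Fin s) (a : ℝ) (T : Finset (Fin N)) (hT : T.card < r) :
    #{h ∈ (univ : Finset (Fin N)).powersetCard r |
        T ⊆ h ∧ a ≤ γ h i ∧ γ h i < a + 1}
      ≤ (q+1) * (N - T.card).choose (r - 1 - T.card) := by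
  classical
  set W := {h ∈ (univ : Finset (Fin N)).powersetCard r |
        T ⊆ h ∧ a ≤ γ h i ∧ γ h i < a + 1} with hW
  have hWmem : ∀ h ∈ W, h.card = r ∧ T ⊆ h ∧ a ≤ γ h i ∧ γ h i < a + 1 := by
    intro h hh
    simp only [hW, Finset.mem_filter, Finset.mem_powersetCard] at hh
    exact ⟨hh.1.2, hh.2⟩
  have hne : ∀ h ∈ W, (h \ T).Nonempty := by
    intro h hh
    obtain ⟨hcard, hTh, _⟩ := hWmem h hh
    rw [← Finset.card_pos, Finset.card_sdiff_of_subset hTh, hcard]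
    omega
  set φ : Finset (Fin N) → Finset (Fin N) := fun h =>
    if hn : (h \ T).Nonempty then h.erase ((h \ T).min' hn) else ∅ with hφ
  have hφeq : ∀ (h : Finset (Fin N)) (hh : h ∈ W), φ h = h.erase ((h \ T).min' (hne h hh)) := by
    intro h hh; simp only [hφ]; rw [dif_pos (hne h hh)]
  have hmaps : ∀ h ∈ W, φ h ∈ {S ∈ (univ : Finset (Fin N)).powersetCard (r-1) | T ⊆ S} := by
    intro h hh
    obtain ⟨hcard, hTh, _⟩ := hWmem h hh
    have hv := Finset.min'_mem (h \ T) (hne h hh)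
    rw [Finset.mem_sdiff] at hv
    rw [hφeq h hh]
    simp only [Finset.mem_filter, Finset.mem_powersetCard]
    refine ⟨⟨Finset.subset_univ _, ?_⟩, ?_⟩
    · rw [Finset.card_erase_of_mem hv.1, hcard]
    · intro x hx
      exact Finset.mem_erase.2 ⟨fun hxx => hv.2 (hxx ▸ hx), hTh hx⟩
  have hfib : ∀ b ∈ {S ∈ (univ : Finset (Fin N)).powersetCard (r-1) | T ⊆ S},
      #{h ∈ W | φ h = b} ≤ q + 1 := by
    intro b hb
    simp only [Finset.mem_filter, Finset.mem_powersetCard] at hb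
    have hbcard : b.card = r - 1 := hb.1.2
    by_cases hFne : ({h ∈ W | φ h = b}).Nonempty
    · obtain ⟨h₀, hh₀⟩ := hFne
      set F := {h ∈ W | φ h = b} with hF
      have hsubb : ∀ h ∈ F, b ⊆ h := by
        intro h hh
        rw [hF, Finset.mem_filter] at hh
        rw [← hh.2, hφeq h hh.1]
        exact Finset.erase_subset _ _
      have hh₀W : h₀ ∈ W := (Finset.mem_filter.1 hh₀).1
      obtain ⟨h₀card, _, h₀a, h₀a'⟩ := hWmem h₀ hh₀W
      have hsub : ((F.erase h₀ : Finset (Finset (Fin N))) : Set (Finset (Fin N)))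
          ⊆ {f' : Finset (Fin N) | f'.card = r ∧ (h₀ ∩ f').card = r - 1 ∧
              ∃ j : Fin s, |γ h₀ j - γ f' j| < 1} := by
        intro h hh
        simp only [Finset.coe_erase, Set.mem_diff, Finset.mem_coe, Set.mem_singleton_iff] at hh
        obtain ⟨hhF, hhne⟩ := hh
        have hhW : h ∈ W := (Finset.mem_filter.1 hhF).1
        obtain ⟨hcard, _, ha, ha'⟩ := hWmem h hhW
        have hbint : b ⊆ h₀ ∩ h :=
          Finset.subset_inter (hsubb h₀ hh₀) (hsubb h hhF)
        have hint1 : r - 1 ≤ (h₀ ∩ h).card := hbcard ▸ Finset.card_le_card hbint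
        have hint2 : (h₀ ∩ h).card ≤ r := h₀card ▸ Finset.card_le_card inter_subset_left
        have hintne : (h₀ ∩ h).card ≠ r := by
          intro hc
          have he : h₀ ∩ h = h₀ := Finset.eq_of_subset_of_card_le inter_subset_left (by omega)
          have hsub2 : h₀ ⊆ h := by rw [← he]; exact inter_subset_right
          exact hhne (Finset.eq_of_subset_of_card_le hsub2 (by omega)).symm
        refine ⟨hcard, by omega, i, ?_⟩
        rw [abs_sub_lt_iff]
        constructor <;> linarith
      have hq := HH h₀ h₀card
      have h1 : (F.erase h₀).card ≤ q := by
        refine le_trans ?_ hq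
        rw [← Set.ncard_coe_finset]
        exact Set.ncard_le_ncard hsub (Set.toFinite _)
      have h2 := Finset.card_erase_add_one hh₀
      omega
    · rw [Finset.not_nonempty_iff_eq_empty] at hFne
      rw [hFne]; simp
  calc W.card ≤ (q+1) * #{S ∈ (univ : Finset (Fin N)).powersetCard (r-1) | T ⊆ S} :=
        Finset.card_le_mul_card_image_of_maps_to hmaps (q+1) hfib
    _ ≤ (q+1) * (N - T.card).choose (r - 1 - T.card) :=
        Nat.mul_le_mul_left _ (sup_count T (r-1))


lemma class_bound
    (HH : ∀ f : Finset (Fin N), f.card = r →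
      ({f' : Finset (Fin N) | f'.card = r ∧ (f ∩ f').card = r - 1 ∧
          ∃ i : Fin s, |γ f i - γ f' i| < 1}).ncard ≤ q)
    (f : Finset (Fin N)) (hf : f.card = r) (T : Finset (Fin N)) (hTf : T ⊆ f) (hTne : T ≠ f) :
    #{h ∈ (univ : Finset (Fin N)).powersetCard r |
        h ≠ f ∧ f ∩ h = T ∧ ∃ i : Fin s, |γ f i - γ h i| < 1}
      ≤ 2 * s * ((q+1) * N ^ (r - 1 - T.card)) := by
  classical
  have hT : T.card < r := by
    have h1 : T.card ≤ f.card := Finset.card_le_card hTf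
    have h2 : T.card ≠ f.card := fun hc => hTne (Finset.eq_of_subset_of_card_le hTf hc.ge)
    omega
  have hsub : {h ∈ (univ : Finset (Fin N)).powersetCard r |
        h ≠ f ∧ f ∩ h = T ∧ ∃ i : Fin s, |γ f i - γ h i| < 1}
      ⊆ (univ : Finset (Fin s)).biUnion (fun i =>
          {h ∈ (univ : Finset (Fin N)).powersetCard r |
            T ⊆ h ∧ γ f i - 1 ≤ γ h i ∧ γ h i < (γ f i - 1) + 1} ∪
          {h ∈ (univ : Finset (Fin N)).powersetCard r |
            T ⊆ h ∧ γ f i ≤ γ h i ∧ γ h i < γ f i + 1}) := by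
    intro h hh
    simp only [Finset.mem_filter] at hh
    obtain ⟨hpow, _, hint, i, habs⟩ := hh
    have hTh : T ⊆ h := by rw [← hint]; exact inter_subset_right
    rw [abs_sub_lt_iff] at habs
    refine Finset.mem_biUnion.2 ⟨i, Finset.mem_univ i, ?_⟩
    rcases lt_or_ge (γ h i) (γ f i) with hlt | hle
    · exact Finset.mem_union_left _ (Finset.mem_filter.2 ⟨hpow, hTh, by linarith, by linarith⟩)
    · exact Finset.mem_union_right _ (Finset.mem_filter.2 ⟨hpow, hTh, hle, by linarith⟩)
  calc #{h ∈ (univ : Finset (Fin N)).powersetCard r |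
        h ≠ f ∧ f ∩ h = T ∧ ∃ i : Fin s, |γ f i - γ h i| < 1}
      ≤ ((univ : Finset (Fin s)).biUnion _).card := Finset.card_le_card hsub
    _ ≤ ∑ i : Fin s, (({h ∈ (univ : Finset (Fin N)).powersetCard r |
            T ⊆ h ∧ γ f i - 1 ≤ γ h i ∧ γ h i < (γ f i - 1) + 1} ∪
          {h ∈ (univ : Finset (Fin N)).powersetCard r |
            T ⊆ h ∧ γ f i ≤ γ h i ∧ γ h i < γ f i + 1}).card) := Finset.card_biUnion_le
    _ ≤ ∑ _i : Fin s, 2 * ((q+1) * N ^ (r - 1 - T.card)) := by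
        refine Finset.sum_le_sum fun i _ => ?_
        have hcc : (N - T.card).choose (r - 1 - T.card) ≤ N ^ (r - 1 - T.card) :=
          le_trans (Nat.choose_le_pow _ _) (Nat.pow_le_pow_left (Nat.sub_le _ _) _)
        have h1 := window HH i (γ f i - 1) T hT
        have h2 := window HH i (γ f i) T hT
        calc _ ≤ _ + _ := Finset.card_union_le _ _
          _ ≤ 2 * ((q+1) * N ^ (r - 1 - T.card)) := by
              have := Nat.mul_le_mul_left (q+1) hcc
              omega
    _ = 2 * s * ((q+1) * N ^ (r - 1 - T.card)) := by
        rw [Finset.sum_const, Finset.card_univ, Fintype.card_fin, smul_eq_mul]; ring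


lemma exists_good_subset (hr : 1 ≤ r)
    (HH : ∀ f : Finset (Fin N), f.card = r →
      ({f' : Finset (Fin N) | f'.card = r ∧ (f ∩ f').card = r - 1 ∧
          ∃ i : Fin s, |γ f i - γ f' i| < 1}).ncard ≤ q)
    (m : ℕ) (hm1 : 1 ≤ m) (hmN : m ≤ N)
    (hK : 2^(r+3) * s * (q+1) * r * m^(2*r-1) ≤ N) :
    ∃ U : Finset (Fin N), 3 * m ≤ 4 * U.card ∧
      ∀ f f' : Finset (Fin N), f ⊆ U → f' ⊆ U → f.card = r → f'.card = r → f ≠ f' →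
        ∀ i : Fin s, 1 ≤ |γ f i - γ f' i| := by
  classical
  have hN1 : 1 ≤ N := le_trans hm1 hmN
  set P : Finset (Finset (Fin N)) := (univ : Finset (Fin N)).powersetCard r with hP
  set allBad : Finset (Finset (Fin N) × Finset (Fin N)) :=
    {p ∈ P ×ˢ P | p.1 ≠ p.2 ∧ ∃ i : Fin s, |γ p.1 i - γ p.2 i| < 1} with hallBad
  set SS : Finset (Finset (Fin N)) := (univ : Finset (Fin N)).powersetCard m with hSS
  have hmemBad : ∀ p ∈ allBad, p.1.card = r ∧ p.2.card = r ∧ p.1 ≠ p.2 ∧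
      ∃ i : Fin s, |γ p.1 i - γ p.2 i| < 1 := by
    intro p hp
    simp only [hallBad, Finset.mem_filter, Finset.mem_product, hP,
      Finset.mem_powersetCard] at hp
    exact ⟨hp.1.1.2, hp.1.2.2, hp.2⟩
  -- weight function
  set w : Finset (Fin N) × Finset (Fin N) → ℕ :=
    fun p => m ^ ((p.1 ∪ p.2).card) * N ^ (2*r - (p.1 ∪ p.2).card) with hw
  -- Step A1 : sum over samples equals sum over bad pairs of superset-counts
  have hA1 : ∑ S ∈ SS, #{p ∈ allBad | p.1 ∪ p.2 ⊆ S}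
      = ∑ p ∈ allBad, #{S ∈ SS | p.1 ∪ p.2 ⊆ S} := by
    simp only [Finset.card_filter]
    exact Finset.sum_comm
  -- Step A2 : per-pair superset count bound
  have hA2 : ∀ p ∈ allBad, #{S ∈ SS | p.1 ∪ p.2 ⊆ S} * N ^ (2*r)
      ≤ N.choose m * w p := by
    intro p hp
    obtain ⟨h1, h2, -, -⟩ := hmemBad p hp
    have hk2r : (p.1 ∪ p.2).card ≤ 2*r := by
      have := Finset.card_union_le p.1 p.2
      omega
    set u := p.1 ∪ p.2 with hu
    by_cases hkm : u.card ≤ m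
    · have e1 : N ^ (2*r) = N ^ u.card * N ^ (2*r - u.card) := by
        rw [← pow_add]; congr 1; omega
      calc #{S ∈ SS | u ⊆ S} * N ^ (2*r)
          = #{S ∈ SS | u ⊆ S} * N ^ u.card * N ^ (2*r - u.card) := by rw [e1]; ring
        _ ≤ (N - u.card).choose (m - u.card) * N ^ u.card * N ^ (2*r - u.card) :=
            Nat.mul_le_mul_right _ (Nat.mul_le_mul_right _ (sup_count u m))
        _ ≤ N.choose m * m ^ u.card * N ^ (2*r - u.card) :=
            Nat.mul_le_mul_right _ (choose_pow hkm hmN)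
        _ = N.choose m * w p := by rw [hw]; ring
    · have : {S ∈ SS | u ⊆ S} = ∅ := by
        rw [Finset.filter_eq_empty_iff]
        intro S hS hsub
        rw [hSS, Finset.mem_powersetCard] at hS
        exact hkm (le_trans (Finset.card_le_card hsub) hS.2.le)
      rw [this]
      simp
  -- Step A3 : total weight bound
  have hA3 : ∑ p ∈ allBad, w p ≤ 2^(r+1) * s * (q+1) * m^(2*r) * N^(2*r-1) := by
    have hfib1 : ∑ f ∈ P, ∑ p ∈ {p ∈ allBad | p.1 = f}, w p = ∑ p ∈ allBad, w p := by
      refine Finset.sum_fiberwise_of_maps_to ?_ w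
      intro p hp
      simp only [hallBad, Finset.mem_filter, Finset.mem_product] at hp
      exact hp.1.1
    rw [← hfib1]
    have hbound1 : ∀ f ∈ P, ∑ p ∈ {p ∈ allBad | p.1 = f}, w p
        ≤ 2^r * (2 * s * ((q+1) * (N ^ (r-1) * m^(2*r)))) := by
      intro f hfP
      have hfr : f.card = r := by
        rw [hP, Finset.mem_powersetCard] at hfP; exact hfP.2
      have hfib2 : ∑ T ∈ f.powerset, ∑ p ∈ {p ∈ {p ∈ allBad | p.1 = f} | p.1 ∩ p.2 = T}, w p
          = ∑ p ∈ {p ∈ allBad | p.1 = f}, w p := by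
        refine Finset.sum_fiberwise_of_maps_to ?_ w
        intro p hp
        rw [Finset.mem_filter] at hp
        rw [Finset.mem_powerset, ← hp.2]
        exact Finset.inter_subset_left
      rw [← hfib2]
      have hinner : ∀ T ∈ f.powerset,
          ∑ p ∈ {p ∈ {p ∈ allBad | p.1 = f} | p.1 ∩ p.2 = T}, w p
          ≤ 2 * s * ((q+1) * (N ^ (r-1) * m^(2*r))) := by
        intro T hT
        rw [Finset.mem_powerset] at hT
        by_cases hTf : T = f
        · have : {p ∈ {p ∈ allBad | p.1 = f} | p.1 ∩ p.2 = T} = ∅ := by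
            rw [Finset.filter_eq_empty_iff]
            rintro p hp hpT
            rw [Finset.mem_filter] at hp
            obtain ⟨hpBad, hp1⟩ := hp
            obtain ⟨hc1, hc2, hne, -⟩ := hmemBad p hpBad
            apply hne
            rw [hp1]
            rw [hp1, hTf] at hpT
            have hsub : f ⊆ p.2 := by
              rw [← hpT]; exact Finset.inter_subset_right
            exact Finset.eq_of_subset_of_card_le hsub (by omega)
          rw [this]; simp
        · -- each p in the class has w p = m^(2r - |T|) * N^|T|
          have hTcard : T.card < r := by
            have h1 : T.card ≤ f.card := Finset.card_le_card hT
            have h2 : T.card ≠ f.card := fun hc => hTf (Finset.eq_of_subset_of_card_le hT hc.ge)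
            omega
          have hwconst : ∀ p ∈ {p ∈ {p ∈ allBad | p.1 = f} | p.1 ∩ p.2 = T},
              w p = m ^ (2*r - T.card) * N ^ T.card := by
            intro p hp
            simp only [Finset.mem_filter] at hp
            obtain ⟨⟨hpBad, hp1⟩, hpT⟩ := hp
            obtain ⟨hc1, hc2, -, -⟩ := hmemBad p hpBad
            have hcui := Finset.card_inter_add_card_union p.1 p.2
            have hku : (p.1 ∪ p.2).card = 2*r - T.card := by
              rw [← hpT]; omega
            have he : 2*r - (2*r - T.card) = T.card := by omega
            simp only [hw]
            rw [hku, he]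
          rw [Finset.sum_congr rfl hwconst, Finset.sum_const, smul_eq_mul]
          have hcard_class : #{p ∈ {p ∈ allBad | p.1 = f} | p.1 ∩ p.2 = T}
              ≤ 2 * s * ((q+1) * N ^ (r - 1 - T.card)) := by
            refine le_trans (Finset.card_le_card_of_injOn (fun p => p.2)
              (t := {h ∈ (univ : Finset (Fin N)).powersetCard r |
                h ≠ f ∧ f ∩ h = T ∧ ∃ i : Fin s, |γ f i - γ h i| < 1}) ?_ ?_)
              (class_bound HH f hfr T hT hTf)
            · intro p hp
              simp only [Finset.mem_coe, Finset.mem_filter] at hp ⊢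
              obtain ⟨⟨hpBad, hp1⟩, hpT⟩ := hp
              obtain ⟨hc1, hc2, hne, hcl⟩ := hmemBad p hpBad
              refine ⟨Finset.mem_powersetCard.2 ⟨Finset.subset_univ _, hc2⟩, ?_, ?_, ?_⟩
              · intro hc
                exact hne (by rw [hp1, hc])
              · rw [← hp1]; exact hpT
              · rw [← hp1]; exact hcl
            · intro p hp p' hp' hpp
              simp only [Finset.mem_coe, Finset.mem_filter] at hp hp'
              have h22 : p.2 = p'.2 := hpp
              exact Prod.ext (hp.1.2.trans hp'.1.2.symm) h22
          calc #{p ∈ {p ∈ allBad | p.1 = f} | p.1 ∩ p.2 = T} * (m ^ (2*r - T.card) * N ^ T.card)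
              ≤ 2 * s * ((q+1) * N ^ (r - 1 - T.card)) * (m ^ (2*r - T.card) * N ^ T.card) :=
                Nat.mul_le_mul_right _ hcard_class
            _ ≤ 2 * s * ((q+1) * N ^ (r - 1 - T.card)) * (m ^ (2*r) * N ^ T.card) := by
                have : m ^ (2*r - T.card) ≤ m ^ (2*r) :=
                  Nat.pow_le_pow_right hm1 (Nat.sub_le _ _)
                exact Nat.mul_le_mul_left _ (Nat.mul_le_mul_right _ this)
            _ = 2 * s * ((q+1) * ((N ^ (r - 1 - T.card) * N ^ T.card) * m^(2*r))) := by ring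
            _ = 2 * s * ((q+1) * (N ^ (r-1) * m^(2*r))) := by
                have he2 : r - 1 - T.card + T.card = r - 1 := by omega
                rw [← pow_add, he2]
      calc ∑ T ∈ f.powerset, ∑ p ∈ {p ∈ {p ∈ allBad | p.1 = f} | p.1 ∩ p.2 = T}, w p
          ≤ ∑ _T ∈ f.powerset, 2 * s * ((q+1) * (N ^ (r-1) * m^(2*r))) :=
            Finset.sum_le_sum hinner
        _ = 2^r * (2 * s * ((q+1) * (N ^ (r-1) * m^(2*r)))) := by
            rw [Finset.sum_const, Finset.card_powerset, hfr, smul_eq_mul]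
    calc ∑ f ∈ P, ∑ p ∈ {p ∈ allBad | p.1 = f}, w p
        ≤ ∑ _f ∈ P, 2^r * (2 * s * ((q+1) * (N ^ (r-1) * m^(2*r)))) :=
          Finset.sum_le_sum hbound1
      _ = P.card * (2^r * (2 * s * ((q+1) * (N ^ (r-1) * m^(2*r))))) := by
          rw [Finset.sum_const, smul_eq_mul]
      _ ≤ N^r * (2^r * (2 * s * ((q+1) * (N ^ (r-1) * m^(2*r))))) := by
          refine Nat.mul_le_mul_right _ ?_
          rw [hP, Finset.card_powersetCard, Finset.card_univ, Fintype.card_fin]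
          exact Nat.choose_le_pow _ _
      _ = 2^(r+1) * s * (q+1) * m^(2*r) * (N^r * N^(r-1)) := by ring
      _ = 2^(r+1) * s * (q+1) * m^(2*r) * N^(2*r-1) := by
          rw [← pow_add]
          congr 2
          omega
  -- Step A4 : conclude existence of a sample with few bad pairs
  have hA4 : ∃ S ∈ SS, 4 * r * #{p ∈ allBad | p.1 ∪ p.2 ⊆ S} ≤ m := by
    have hmain : (∑ S ∈ SS, 4 * r * #{p ∈ allBad | p.1 ∪ p.2 ⊆ S}) * N^(2*r)
        ≤ (SS.card * m) * N^(2*r) := by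
      have c1 : (∑ S ∈ SS, #{p ∈ allBad | p.1 ∪ p.2 ⊆ S}) * N^(2*r)
          ≤ N.choose m * ∑ p ∈ allBad, w p := by
        rw [hA1, Finset.sum_mul, Finset.mul_sum]
        exact Finset.sum_le_sum hA2
      have c2 : N.choose m * ∑ p ∈ allBad, w p
          ≤ N.choose m * (2^(r+1) * s * (q+1) * m^(2*r) * N^(2*r-1)) :=
        Nat.mul_le_mul_left _ hA3
      have c3 : 4 * r * (N.choose m * (2^(r+1) * s * (q+1) * m^(2*r) * N^(2*r-1)))
          ≤ N.choose m * m * N^(2*r) := by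
        have e1 : 4 * r * (N.choose m * (2^(r+1) * s * (q+1) * m^(2*r) * N^(2*r-1)))
            = N.choose m * ((2^(r+3) * s * (q+1) * r * m^(2*r-1)) * (m * N^(2*r-1))) := by
          have em : m^(2*r) = m^(2*r-1) * m := by
            rw [← pow_succ]
            congr 1
            omega
          rw [em]; ring
        rw [e1]
        have e2 : N^(2*r) = N * N^(2*r-1) := by
          rw [← pow_succ']
          congr 1
          omega
        calc N.choose m * ((2^(r+3) * s * (q+1) * r * m^(2*r-1)) * (m * N^(2*r-1)))
            ≤ N.choose m * (N * (m * N^(2*r-1))) :=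
              Nat.mul_le_mul_left _ (Nat.mul_le_mul_right _ hK)
          _ = N.choose m * m * N^(2*r) := by rw [e2]; ring
      have hSScard : SS.card = N.choose m := by
        rw [hSS, Finset.card_powersetCard, Finset.card_univ, Fintype.card_fin]
      calc (∑ S ∈ SS, 4 * r * #{p ∈ allBad | p.1 ∪ p.2 ⊆ S}) * N^(2*r)
          = 4 * r * ((∑ S ∈ SS, #{p ∈ allBad | p.1 ∪ p.2 ⊆ S}) * N^(2*r)) := by
            rw [← Finset.mul_sum]; ring
        _ ≤ 4 * r * (N.choose m * ∑ p ∈ allBad, w p) := Nat.mul_le_mul_left _ c1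
        _ ≤ 4 * r * (N.choose m * (2^(r+1) * s * (q+1) * m^(2*r) * N^(2*r-1))) :=
            Nat.mul_le_mul_left _ c2
        _ ≤ N.choose m * m * N^(2*r) := c3
        _ = (SS.card * m) * N^(2*r) := by rw [hSScard]
    have hNpos : 0 < N^(2*r) := Nat.pow_pos (by omega)
    have hsum : ∑ S ∈ SS, 4 * r * #{p ∈ allBad | p.1 ∪ p.2 ⊆ S} ≤ SS.card * m :=
      Nat.le_of_mul_le_mul_right hmain hNpos
    have hSSne : SS.Nonempty := by
      rw [hSS, Finset.powersetCard_nonempty, Finset.card_univ, Fintype.card_fin]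
      exact hmN
    have := Finset.exists_le_of_sum_le hSSne
      (f := fun S => 4 * r * #{p ∈ allBad | p.1 ∪ p.2 ⊆ S}) (g := fun _ => m)
      (by rwa [Finset.sum_const, smul_eq_mul])
    exact this
  -- Step A5 : deletion
  obtain ⟨S, hSmem, hSbad⟩ := hA4
  have hScard : S.card = m := by
    rw [hSS, Finset.mem_powersetCard] at hSmem; exact hSmem.2
  set B := {p ∈ allBad | p.1 ∪ p.2 ⊆ S} with hB
  set D := B.biUnion (fun p => p.1 \ p.2) with hD
  refine ⟨S \ D, ?_, ?_⟩
  · have hDcard : D.card ≤ r * B.card := by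
      calc D.card ≤ ∑ p ∈ B, (p.1 \ p.2).card := Finset.card_biUnion_le
        _ ≤ ∑ _p ∈ B, r := by
          refine Finset.sum_le_sum fun p hp => ?_
          have hp' : p ∈ allBad := (Finset.mem_filter.1 hp).1
          obtain ⟨hc1, -, -, -⟩ := hmemBad p hp'
          calc (p.1 \ p.2).card ≤ p.1.card := Finset.card_le_card (Finset.sdiff_subset)
            _ = r := hc1
        _ = B.card * r := by rw [Finset.sum_const, smul_eq_mul]
        _ = r * B.card := by ring
    have hU : m ≤ (S \ D).card + D.card := by
      rw [← hScard]
      exact Finset.card_le_card_sdiff_add_card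
    have : 4 * (r * B.card) ≤ m := by
      calc 4 * (r * B.card) = 4 * r * B.card := by ring
        _ ≤ m := hSbad
    omega
  · intro f f' hfU hf'U hcf hcf' hne i
    by_contra hlt
    push_neg at hlt
    have hUS : S \ D ⊆ S := Finset.sdiff_subset
    have hpBad : (f, f') ∈ allBad := by
      simp only [hallBad, Finset.mem_filter, Finset.mem_product, hP, Finset.mem_powersetCard]
      exact ⟨⟨⟨Finset.subset_univ _, hcf⟩, ⟨Finset.subset_univ _, hcf'⟩⟩, hne, ⟨i, hlt⟩⟩
    have hpB : (f, f') ∈ B := by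
      rw [hB, Finset.mem_filter]
      exact ⟨hpBad, Finset.union_subset (hfU.trans hUS) (hf'U.trans hUS)⟩
    have hdiffne : (f \ f').Nonempty := by
      rw [Finset.sdiff_nonempty]
      intro hsub
      exact hne (Finset.eq_of_subset_of_card_le hsub (by omega))
    obtain ⟨x, hx⟩ := hdiffne
    have hxD : x ∈ D := by
      rw [hD]
      exact Finset.mem_biUnion.2 ⟨(f, f'), hpB, hx⟩
    have hxf : x ∈ f := (Finset.mem_sdiff.1 hx).1
    have hxU : x ∈ S \ D := hfU hxf
    exact (Finset.mem_sdiff.1 hxU).2 hxD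


end helpers


/-- The rainbow/deletion lemma (Lemma 2.4). -/
theorem stmt_5 (r s q : ℕ) (hr : 1 ≤ r) (hs : 1 ≤ s) (hq : 1 ≤ q) :
    ∃ c : ℝ, 0 < c ∧
      ∀ (N : ℕ) (γ : Finset (Fin N) → Fin s → ℝ),
        (∀ f : Finset (Fin N), f.card = r →
          ({f' : Finset (Fin N) | f'.card = r ∧ (f ∩ f').card = r - 1 ∧
              ∃ i : Fin s, |γ f i - γ f' i| < 1}).ncard ≤ q) →
        ∃ U : Finset (Fin N),
          c * (N : ℝ) ^ ((1 : ℝ) / (2 * (r : ℝ) - 1)) ≤ (U.card : ℝ) ∧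
          ∀ f f' : Finset (Fin N), f ⊆ U → f' ⊆ U → f.card = r → f'.card = r →
            f ≠ f' → ∀ i : Fin s, 1 ≤ |γ f i - γ f' i| := by
  classical
  set K : ℕ := 2^(r+3) * s * (q+1) * r with hKdef
  have hKpos : 0 < K := by
    have h2 : 0 < 2^(r+3) := Nat.pow_pos (by norm_num)
    exact Nat.mul_pos (Nat.mul_pos (Nat.mul_pos h2 hs) (by omega)) hr
  have hrR : (1:ℝ) ≤ (r:ℝ) := by exact_mod_cast hr
  have h2r1pos : (0:ℝ) < 2*(r:ℝ) - 1 := by linarith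
  set α : ℝ := (1:ℝ) / (2*(r:ℝ) - 1) with hα
  have hαpos : 0 < α := by positivity
  have hα1 : α ≤ 1 := by
    rw [hα, div_le_one h2r1pos]; linarith
  have hKR : (1:ℝ) ≤ (K:ℝ) := by exact_mod_cast hKpos
  refine ⟨1 / (2^(2*r+3) * (K:ℝ)), by positivity, ?_⟩
  intro N γ HH
  have hcast : ((2*r - 1 : ℕ) : ℝ) = 2*(r:ℝ) - 1 := by
    have h1 : 1 ≤ 2*r := by omega
    push_cast [h1]
    ring
  by_cases hN0 : N = 0
  · refine ⟨∅, ?_, ?_⟩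
    · subst hN0
      rw [Nat.cast_zero, Real.zero_rpow (by positivity)]
      simp
    · intro f f' hf hf' hcf hcf' hne i
      exfalso
      apply hne
      rw [Finset.subset_empty.1 hf, Finset.subset_empty.1 hf']
  · have hN1 : 1 ≤ N := by omega
    have hNR1 : (1:ℝ) ≤ (N:ℝ) := by exact_mod_cast hN1
    have hNα_le : (N:ℝ) ^ α ≤ (N:ℝ) := by
      calc (N:ℝ) ^ α ≤ (N:ℝ) ^ (1:ℝ) := Real.rpow_le_rpow_of_exponent_le hNR1 hα1
        _ = (N:ℝ) := Real.rpow_one _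
    by_cases hNsmall : N ≤ 2^(2*r) * K
    · -- small N : use a singleton
      refine ⟨{⟨0, by omega⟩}, ?_, ?_⟩
      · rw [Finset.card_singleton, Nat.cast_one]
        have hNle : (N:ℝ) ≤ 2^(2*r) * (K:ℝ) := by exact_mod_cast hNsmall
        have h8 : (2:ℝ)^(2*r) * (K:ℝ) = (2:ℝ)^(2*r+3) * K / 8 := by
          rw [pow_add]
          ring
        rw [div_mul_eq_mul_div, one_mul, div_le_one (by positivity)]
        calc (N:ℝ) ^ α ≤ (N:ℝ) := hNα_le
          _ ≤ 2^(2*r) * (K:ℝ) := hNle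
          _ = (2:ℝ)^(2*r+3) * K / 8 := h8
          _ ≤ (2:ℝ)^(2*r+3) * K := by
              have : (0:ℝ) < (2:ℝ)^(2*r+3) * K := by positivity
              linarith
      · intro f f' hf hf' hcf hcf' hne i
        exfalso
        apply hne
        have h1 : f = {(⟨0, by omega⟩ : Fin N)} := by
          rcases Finset.subset_singleton_iff.1 hf with h | h
          · exfalso; rw [h] at hcf; simp at hcf; omega
          · exact h
        have h2 : f' = {(⟨0, by omega⟩ : Fin N)} := by
          rcases Finset.subset_singleton_iff.1 hf' with h | h
          · exfalso; rw [h] at hcf'; simp at hcf'; omega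
          · exact h
        rw [h1, h2]
    · -- large N
      push_neg at hNsmall
      have hNKbig : (2:ℝ)^(2*r) * (K:ℝ) < (N:ℝ) := by exact_mod_cast hNsmall
      set x : ℝ := ((N:ℝ)/(K:ℝ)) ^ α with hx
      have hNKpos : (0:ℝ) < (N:ℝ)/(K:ℝ) := by positivity
      have hxpos : 0 < x := Real.rpow_pos_of_pos hNKpos _
      have hx2 : (2:ℝ) ≤ x := by
        have h1 : (2:ℝ)^(2*r) ≤ (N:ℝ)/(K:ℝ) := by
          rw [le_div_iff₀ (by positivity)]
          linarith
        have h2 : ((2:ℝ)^(2*r)) ^ α ≤ x := by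
          rw [hx]
          exact Real.rpow_le_rpow (by positivity) h1 hαpos.le
        have h3 : (2:ℝ) ≤ ((2:ℝ)^(2*r)) ^ α := by
          have e1 : ((2:ℝ)^(2*r)) ^ α = (2:ℝ) ^ ((2*r : ℕ) * α) := by
            rw [← Real.rpow_natCast 2 (2*r), ← Real.rpow_mul (by norm_num)]
          have e2 : (1:ℝ) ≤ (2*r : ℕ) * α := by
            push_cast
            rw [hα, mul_div_assoc'] -- maybe not needed
            rw [le_div_iff₀ h2r1pos]
            linarith
          calc (2:ℝ) = (2:ℝ) ^ (1:ℝ) := (Real.rpow_one _).symm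
            _ ≤ (2:ℝ) ^ ((2*r : ℕ) * α) := Real.rpow_le_rpow_of_exponent_le (by norm_num) e2
            _ = ((2:ℝ)^(2*r)) ^ α := e1.symm
        linarith
      set m : ℕ := ⌊x⌋₊ with hm
      have hmx : (m:ℝ) ≤ x := Nat.floor_le hxpos.le
      have hxm1 : x < m + 1 := Nat.lt_floor_add_one x
      have hm2 : 2 ≤ m := by
        rw [hm]
        exact Nat.le_floor (by exact_mod_cast hx2)
      have hxN : x ≤ (N:ℝ) := by
        calc x ≤ (N:ℝ) ^ α := by
              rw [hx]
              exact Real.rpow_le_rpow (by positivity) (div_le_self (by positivity) hKR) hαpos.le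
          _ ≤ (N:ℝ) := hNα_le
      have hmN : m ≤ N := by
        have : (m:ℝ) ≤ (N:ℝ) := le_trans hmx hxN
        exact_mod_cast this
      have hKm : K * m^(2*r-1) ≤ N := by
        have hpow : (m:ℝ)^(2*r-1) ≤ x^(2*r-1) := pow_le_pow_left₀ (by positivity) hmx _
        have hxid : x^(2*r-1) = (N:ℝ)/(K:ℝ) := by
          rw [hx, ← Real.rpow_natCast (((N:ℝ)/(K:ℝ)) ^ α) (2*r-1), ← Real.rpow_mul hNKpos.le]
          rw [hcast, hα]
          rw [one_div, inv_mul_cancel₀ (ne_of_gt h2r1pos)]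
          exact Real.rpow_one _
        have : (K:ℝ) * (m:ℝ)^(2*r-1) ≤ (N:ℝ) := by
          calc (K:ℝ) * (m:ℝ)^(2*r-1) ≤ (K:ℝ) * x^(2*r-1) := by
                exact mul_le_mul_of_nonneg_left hpow (by positivity)
            _ = (K:ℝ) * ((N:ℝ)/(K:ℝ)) := by rw [hxid]
            _ = (N:ℝ) := by field_simp
        exact_mod_cast this
      obtain ⟨U, hUcard, hUgood⟩ := exists_good_subset hr HH m (by omega) hmN (by
        rw [hKdef] at hKm
        exact hKm)
      refine ⟨U, ?_, hUgood⟩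
      have hUc : (3:ℝ) * m ≤ 4 * (U.card:ℝ) := by exact_mod_cast hUcard
      have hmge : (m:ℝ) ≥ x - 1 := by linarith
      have hmge2 : (m:ℝ) ≥ x/2 := by linarith
      have hxNα : x ≥ (N:ℝ)^α / (K:ℝ) := by
        rw [hx, Real.div_rpow (by positivity) (by positivity)]
        have hKα : (K:ℝ)^α ≤ (K:ℝ) := by
          calc (K:ℝ)^α ≤ (K:ℝ)^(1:ℝ) := Real.rpow_le_rpow_of_exponent_le hKR hα1
            _ = (K:ℝ) := Real.rpow_one _
        exact div_le_div_of_nonneg_left (by positivity) (by positivity) hKα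
      have h2pow : (8:ℝ) ≤ (2:ℝ)^(2*r+3) := by
        calc (8:ℝ) = 2^3 := by norm_num
        _ ≤ (2:ℝ)^(2*r+3) := pow_le_pow_right₀ (by norm_num) (by omega)
      have hNαpos : (0:ℝ) ≤ (N:ℝ)^α := by positivity
      have hd : (1:ℝ)/(2^(2*r+3)*(K:ℝ)) ≤ 3/(8*(K:ℝ)) := by
        rw [div_le_div_iff₀ (by positivity) (by positivity)]
        nlinarith [mul_le_mul_of_nonneg_right h2pow (le_trans zero_le_one hKR)]
      calc 1/(2^(2*r+3)*(K:ℝ)) * (N:ℝ)^α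
          ≤ 3/(8*(K:ℝ)) * (N:ℝ)^α := mul_le_mul_of_nonneg_right hd hNαpos
        _ = (3/8) * ((N:ℝ)^α / K) := by ring
        _ ≤ (3/8) * x := by linarith
        _ ≤ (U.card:ℝ) := by linarith
end

section
/- Let σ : S^{(2)} → ℝ where S = [N_2], and suppose: (a) for every a ∈ S, the sequence {σ(a,b)}_{b=a+1,...,N_2} is exponential (type T1), i.e. 0 ≤ 2σ(a,b) ≤ σ(a,b+1); and (b) for every d < e ≤ N_2, the sequence {σ(a,e) − σ(a,d)}_{a=1,...,d−1} is exponential (type T1), i.e. 0 ≤ 2(σ(a,e)−σ(a,d)) ≤ σ(a+1,e)−σ(a+1,d). Then for all even a, b ∈ S with a + 2 < b, we have 0 ≤ 2σ(a,b) ≤ σ(a+2,b); in particular, restricted to the even elements S_3 of S, for every b ∈ S_3 the sequence {σ(a,b)}_{a ∈ S_3, a < b} is exponential. -/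
/-- The inequality-chasing step of Section 4: if all rows and all difference
columns of `σ` are exponential (type T1), then the columns restricted to even
indices are exponential. -/
theorem stmt_14 (N₂ : ℕ) (σ : ℕ → ℕ → ℝ)
    (hrow : ∀ a b : ℕ, 1 ≤ a → a < b → b + 1 ≤ N₂ →
      0 ≤ 2 * σ a b ∧ 2 * σ a b ≤ σ a (b + 1))
    (hcol : ∀ a d e : ℕ, 1 ≤ a → a + 1 < d → d < e → e ≤ N₂ →
      0 ≤ 2 * (σ a e - σ a d) ∧
        2 * (σ a e - σ a d) ≤ σ (a + 1) e - σ (a + 1) d) :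
    ∀ a b : ℕ, Even a → Even b → 1 ≤ a → a + 2 < b → b ≤ N₂ →
      0 ≤ 2 * σ a b ∧ 2 * σ a b ≤ σ (a + 2) b := by
  intro a b ha hb h1 hab hbN
  have hb4 : a + 4 ≤ b := by
    obtain ⟨i, hi⟩ := ha; obtain ⟨j, hj⟩ := hb; omega
  have mono : ∀ k c, a < c → c + k ≤ N₂ → σ a c ≤ σ a (c + k) := by
    intro k
    induction k with
    | zero => intro c _ _; simp
    | succ n ih =>
      intro c hac hk
      have h2 := hrow a (c + n) h1 (by omega) (by omega)
      have h3 := ih c hac (by omega)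
      have : c + (n + 1) = c + n + 1 := by ring
      rw [this]
      nlinarith [h2.1, h2.2]
  -- nonnegativity
  have h0 := hrow a (b - 1) h1 (by omega) (by omega)
  have hb1 : b - 1 + 1 = b := by omega
  rw [hb1] at h0
  constructor
  · nlinarith [h0.1, h0.2]
  · have h3 := hrow a (a + 3) h1 (by omega) (by omega)
    have hmono : σ a (a + 4) ≤ σ a b := by
      have := mono (b - (a + 4)) (a + 4) (by omega) (by omega)
      rwa [show a + 4 + (b - (a + 4)) = b by omega] at this
    have hc1 := hcol a (a + 3) b h1 (by omega) (by omega) hbN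
    have hc2 := hcol (a + 1) (a + 3) b (by omega) (by omega) (by omega) hbN
    have hpos := hrow (a + 2) (a + 3) (by omega) (by omega) (by omega)
    have e1 : a + 1 + 1 = a + 2 := by ring
    rw [e1] at hc2
    have e2 : a + 3 + 1 = a + 4 := by ring
    rw [e2] at h3
    linarith [hc1.2, hc2.2, hpos.1, h3.2, hmono]
end

section
/- Let r ≥ 2 and s ≥ 1 be integers. For every n there exists N ≤ tw_r(C·n) (for a constant C depending only on r and s) such that every coloring of the r-element subsets of an N-element set with s colors contains a monochromatic subset of size n (all of whose r-subsets get the same color). -/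
/-- The tower function. -/
def tw (k x : ℕ) : ℕ := (fun y => 2 ^ y)^[k - 1] x

/-- End-homogeneity: colors of `insert w e` for `e ⊆ P` of size `r` don't depend
on the choice of `w ∈ A` above `e`. -/
def EndHom (s : ℕ) (χ : Finset ℕ → Fin s) (r : ℕ) (P A : Finset ℕ) : Prop :=
  ∀ e ⊆ P, e.card = r → ∀ w ∈ A, ∀ w' ∈ A,
    (∀ x ∈ e, x < w) → (∀ x ∈ e, x < w') → χ (insert w e) = χ (insert w' e)

def K (s r p : ℕ) : ℕ := s ^ (p + 1) ^ (r - 1)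

def G (s r : ℕ) : ℕ → ℕ → ℕ
  | _, 0 => 0
  | p, m + 1 => 1 + K s r p * G s r (p + 1) m

lemma greedy (s : ℕ) (hs : 1 ≤ s) (r : ℕ) (χ : Finset ℕ → Fin s) :
    ∀ m (P A : Finset ℕ), (∀ p ∈ P, ∀ a ∈ A, p < a) → EndHom s χ r P A →
      G s r P.card m ≤ A.card →
      ∃ V ⊆ A, V.card = m ∧ EndHom s χ r (P ∪ V) V := by
  intro m
  induction m with
  | zero =>
    intro P A _ _ _
    exact ⟨∅, Finset.empty_subset _, Finset.card_empty, fun e he hc w hw => absurd hw (by simp)⟩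
  | succ m ih =>
    intro P A hPA hEnd hcard
    have hA : A.Nonempty := by
      rw [← Finset.card_pos]
      have : 0 < G s r P.card (m+1) := by simp [G]
      omega
    set v := A.min' hA with hv
    have hvA : v ∈ A := A.min'_mem hA
    set A₁ := A.erase v with hA₁
    have hA₁card : K s r P.card * G s r (P.card + 1) m ≤ A₁.card := by
      have := Finset.card_erase_of_mem hvA
      have : A₁.card = A.card - 1 := this
      have h2 : G s r P.card (m+1) = 1 + K s r P.card * G s r (P.card+1) m := rfl
      omega
    -- the relevant edge set
    set E := (insert v P).powerset.filter (fun e => e.card = r ∧ v ∈ e) with hE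
    have hEcard : E.card ≤ (P.card + 1) ^ (r - 1) := by
      have hinj : ∀ e ∈ E, e.erase v ∈ P.powersetCard (r - 1) := by
        intro e he
        rw [hE, Finset.mem_filter, Finset.mem_powerset] at he
        rw [Finset.mem_powersetCard]
        refine ⟨fun x hx => ?_, ?_⟩
        · have hxe := Finset.mem_of_mem_erase hx
          have hxv := Finset.ne_of_mem_erase hx
          have := he.1 hxe
          rw [Finset.mem_insert] at this
          tauto
        · rw [Finset.card_erase_of_mem he.2.2, he.2.1]
      have hinj2 : Set.InjOn (fun e => Finset.erase e v) E := by
        intro a ha b hb hab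
        rw [Finset.mem_coe, hE, Finset.mem_filter] at ha hb
        have := Finset.insert_erase ha.2.2
        have := Finset.insert_erase hb.2.2
        simp only at hab
        rw [← Finset.insert_erase ha.2.2, hab, Finset.insert_erase hb.2.2]
      calc E.card ≤ (P.powersetCard (r-1)).card :=
            Finset.card_le_card_of_injOn _ hinj hinj2
        _ = P.card.choose (r-1) := Finset.card_powersetCard _ _
        _ ≤ P.card ^ (r-1) := Nat.choose_le_pow _ _
        _ ≤ (P.card + 1) ^ (r-1) := Nat.pow_le_pow_left (Nat.le_succ _) _
    haveI : Nonempty (Fin s) := ⟨⟨0, hs⟩⟩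
    -- pigeonhole on the coloring pattern
    set κ : ℕ → ({e // e ∈ E} → Fin s) := fun w e => χ (insert w e.1) with hκ
    have hpigeon : (Finset.univ : Finset ({e // e ∈ E} → Fin s)).card *
        G s r (P.card + 1) m ≤ A₁.card := by
      calc (Finset.univ : Finset ({e // e ∈ E} → Fin s)).card * G s r (P.card+1) m
          = s ^ E.card * G s r (P.card+1) m := by
            rw [Finset.card_univ, Fintype.card_fun, Fintype.card_coe, Fintype.card_fin]
        _ ≤ K s r P.card * G s r (P.card+1) m :=
            Nat.mul_le_mul_right _ (Nat.pow_le_pow_right hs hEcard)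
        _ ≤ A₁.card := hA₁card
    obtain ⟨b, -, hb⟩ := Finset.exists_le_card_fiber_of_mul_le_card_of_maps_to
      (s := A₁) (t := (Finset.univ : Finset ({e // e ∈ E} → Fin s))) (f := κ)
      (n := G s r (P.card + 1) m)
      (fun a _ => Finset.mem_univ _) Finset.univ_nonempty hpigeon
    set B := A₁.filter (fun w => κ w = b) with hB
    have hBA₁ : B ⊆ A₁ := Finset.filter_subset _ _
    have hBA : B ⊆ A := hBA₁.trans (Finset.erase_subset _ _)
    have hvP : v ∉ P := fun h => lt_irrefl v (hPA v h v hvA)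
    have hPcard : (insert v P).card = P.card + 1 := Finset.card_insert_of_notMem hvP
    have hvB : ∀ a ∈ B, v < a := by
      intro a ha
      have haA₁ := hBA₁ ha
      have : a ≠ v := Finset.ne_of_mem_erase haA₁
      have := A.min'_le a (Finset.mem_of_mem_erase haA₁)
      omega
    have hstep : ∀ q ∈ insert v P, ∀ a ∈ B, q < a := by
      intro q hq a ha
      rw [Finset.mem_insert] at hq
      rcases hq with rfl | hq
      · exact hvB a ha
      · exact hPA q hq a (hBA ha)
    have hEndB : EndHom s χ r (insert v P) B := by
      intro e he hc w hw w' hw' haw haw'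
      by_cases hve : v ∈ e
      · have heE : e ∈ E := by
          rw [hE, Finset.mem_filter, Finset.mem_powerset]; exact ⟨he, hc, hve⟩
        have h1 : κ w = b := (Finset.mem_filter.mp hw).2
        have h2 : κ w' = b := (Finset.mem_filter.mp hw').2
        exact (congrFun h1 ⟨e, heE⟩).trans (congrFun h2 ⟨e, heE⟩).symm
      · have heP : e ⊆ P := fun x hx => by
          have := he hx; rw [Finset.mem_insert] at this
          rcases this with rfl | h; · exact absurd hx hve
          · exact h
        exact hEnd e heP hc w (hBA hw) w' (hBA hw') haw haw'
    obtain ⟨V', hV'B, hV'card, hEnd'⟩ := ih (insert v P) B hstep hEndB (by rw [hPcard]; exact hb)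
    have hvV' : v ∉ V' := fun h => lt_irrefl v (hvB v (hV'B h))
    refine ⟨insert v V', ?_, ?_, ?_⟩
    · intro x hx
      rw [Finset.mem_insert] at hx
      rcases hx with rfl | hx
      · exact hvA
      · exact hBA (hV'B hx)
    · rw [Finset.card_insert_of_notMem hvV', hV'card]
    · have hsets : P ∪ insert v V' = insert v P ∪ V' := by
        ext x
        simp only [Finset.mem_union, Finset.mem_insert]
        tauto
      intro e he hc w hw w' hw' haw haw'
      rw [hsets] at he
      have key : ∀ u, u = v → (∀ x ∈ e, x < u) → e ⊆ P := by
        intro u hu hau x hx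
        have hxe := he hx
        rw [Finset.mem_union, Finset.mem_insert] at hxe
        have hxv : x < v := hu ▸ hau x hx
        rcases hxe with (rfl | hP) | hV'
        · omega
        · exact hP
        · exact absurd hxv (by have := hvB x (hV'B hV'); omega)
      rw [Finset.mem_insert] at hw hw'
      rcases hw with hwv | hw <;> rcases hw' with hwv' | hw'
      · rw [hwv, hwv']
      · have heP := key w hwv haw
        exact hEnd e heP hc w (hwv ▸ hvA) w' (hBA (hV'B hw')) haw haw'
      · have heP := key w' hwv' haw'
        exact hEnd e heP hc w (hBA (hV'B hw)) w' (hwv' ▸ hvA) haw haw'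
      · exact hEnd' e he hc w hw w' hw' haw haw'

def RamseyIn (s r n R : ℕ) : Prop :=
  ∀ (A : Finset ℕ) (χ : Finset ℕ → Fin s), R ≤ A.card →
    ∃ T ⊆ A, n ≤ T.card ∧ ∃ c : Fin s, ∀ f ⊆ T, f.card = r → χ f = c

lemma ramseyIn_base (s : ℕ) (hs : 1 ≤ s) (n : ℕ) : RamseyIn s 1 n (s * n) := by
  intro A χ hA
  haveI : Nonempty (Fin s) := ⟨⟨0, hs⟩⟩
  obtain ⟨c, -, hc⟩ := Finset.exists_le_card_fiber_of_mul_le_card_of_maps_to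
    (s := A) (t := (Finset.univ : Finset (Fin s))) (f := fun a => χ {a}) (n := n)
    (fun a _ => Finset.mem_univ _) Finset.univ_nonempty
    (by rw [Finset.card_univ, Fintype.card_fin]; exact hA)
  refine ⟨A.filter (fun a => χ {a} = c), Finset.filter_subset _ _, hc, c, ?_⟩
  intro f hf hcard
  obtain ⟨a, rfl⟩ := Finset.card_eq_one.mp hcard
  have := hf (Finset.mem_singleton_self a)
  exact (Finset.mem_filter.mp this).2

lemma ramseyIn_step (s : ℕ) (hs : 1 ≤ s) (r : ℕ) (hr : 1 ≤ r) (n R : ℕ)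
    (ih : RamseyIn s r n R) : RamseyIn s (r + 1) n (G s r 0 (R + 1)) := by
  intro A χ hA
  have hEnd0 : EndHom s χ r ∅ A := by
    intro e he hc
    have : e = ∅ := Finset.subset_empty.mp he
    subst this
    simp at hc
    omega
  obtain ⟨V, hVA, hVcard, hEnd⟩ := greedy s hs r χ (R + 1) ∅ A (by simp) hEnd0
    (by simpa using hA)
  rw [Finset.empty_union] at hEnd
  have hVne : V.Nonempty := by rw [← Finset.card_pos, hVcard]; omega
  set z := V.max' hVne with hz
  have hzV : z ∈ V := V.max'_mem hVne
  set V' := V.erase z with hV'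
  have hV'card : V'.card = R := by rw [hV', Finset.card_erase_of_mem hzV, hVcard]; omega
  obtain ⟨T, hTV', hTcard, c, hT⟩ := ih V' (fun e => χ (insert z e)) (le_of_eq hV'card.symm)
  have hTV : T ⊆ V := hTV'.trans (Finset.erase_subset _ _)
  refine ⟨T, hTV.trans hVA, hTcard, c, ?_⟩
  intro f hf hcard
  have hfne : f.Nonempty := by rw [← Finset.card_pos, hcard]; omega
  set y := f.max' hfne with hy
  have hyf : y ∈ f := f.max'_mem hfne
  set e := f.erase y with he
  have hecard : e.card = r := by rw [he, Finset.card_erase_of_mem hyf, hcard]; rfl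
  have heT : e ⊆ T := (Finset.erase_subset _ _).trans hf
  have heV : e ⊆ V := heT.trans hTV
  have haby : ∀ x ∈ e, x < y := by
    intro x hx
    have hxf := Finset.mem_of_mem_erase hx
    have hxy := Finset.ne_of_mem_erase hx
    have := f.le_max' x hxf
    omega
  have habz : ∀ x ∈ e, x < z := by
    intro x hx
    have hxV' : x ∈ V' := hTV' (heT hx)
    have hxV := Finset.mem_of_mem_erase hxV'
    have hxz := Finset.ne_of_mem_erase hxV'
    have := V.le_max' x hxV
    omega
  have hyV : y ∈ V := hTV (hf hyf)
  have step1 : χ (insert y e) = χ (insert z e) :=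
    hEnd e heV hecard y hyV z hzV haby habz
  have : insert y e = f := Finset.insert_erase hyf
  rw [← this, step1]
  exact hT e heT hecard

def RB (s : ℕ) : ℕ → ℕ → ℕ
  | 0, _ => 0
  | 1, n => s * n
  | (r + 2), n => G s (r + 1) 0 (RB s (r + 1) n + 1)

lemma ramseyIn_all (s : ℕ) (hs : 1 ≤ s) :
    ∀ r, 1 ≤ r → ∀ n, RamseyIn s r n (RB s r n) := by
  intro r
  induction r with
  | zero => omega
  | succ r ih =>
    intro _ n
    match r with
    | 0 => exact ramseyIn_base s hs n
    | r + 1 =>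
      exact ramseyIn_step s hs (r + 1) (by omega) n (RB s (r + 1) n)
        (ih (by omega) n)

lemma G_le (s : ℕ) (hs : 1 ≤ s) (r : ℕ) :
    ∀ m p, G s r p m ≤ (2 * s) ^ ((p + m) ^ (r - 1) * m) := by
  intro m
  induction m with
  | zero => intro p; simp [G]
  | succ m ih =>
    intro p
    have hX1 : 1 ≤ (p + (m + 1)) ^ (r - 1) := Nat.one_le_pow _ _ (by omega)
    set X := (p + (m + 1)) ^ (r - 1) with hX
    have h1 : G s r p (m + 1) = 1 + K s r p * G s r (p + 1) m := rfl
    have h2 : G s r (p + 1) m ≤ (2 * s) ^ (X * m) := by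
      have := ih (p + 1)
      have hpe : p + 1 + m = p + (m + 1) := by omega
      rwa [hpe] at this
    have h3 : K s r p ≤ s ^ X := by
      apply Nat.pow_le_pow_right hs
      apply Nat.pow_le_pow_left
      omega
    have h4 : 1 ≤ s ^ X * (2 * s) ^ (X * m) :=
      Nat.one_le_iff_ne_zero.mpr (by positivity)
    have h5 : 2 * s ^ X ≤ (2 * s) ^ X := by
      rw [Nat.mul_pow]
      exact Nat.mul_le_mul_right _ (by
        calc 2 = 2 ^ 1 := rfl
        _ ≤ 2 ^ X := Nat.pow_le_pow_right (by norm_num) hX1)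
    calc G s r p (m + 1) = 1 + K s r p * G s r (p + 1) m := h1
      _ ≤ s ^ X * (2*s) ^ (X*m) + s ^ X * (2*s) ^ (X*m) := by
          have := Nat.mul_le_mul h3 h2
          omega
      _ = 2 * s ^ X * (2*s) ^ (X*m) := by ring
      _ ≤ (2*s) ^ X * (2*s) ^ (X*m) := Nat.mul_le_mul_right _ h5
      _ = (2*s) ^ (X + X*m) := by rw [← pow_add]
      _ = (2*s) ^ (X * (m+1)) := by ring_nf

def tw' (k x : ℕ) : ℕ := (fun y => 2 ^ y)^[k - 1] x

lemma tw'_succ (k x : ℕ) (hk : 1 ≤ k) : tw' (k + 1) x = 2 ^ tw' k x := by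
  unfold tw'
  have h1 : k + 1 - 1 = (k - 1) + 1 := by omega
  rw [h1, Function.iterate_succ_apply']

lemma tw'_one (x : ℕ) : tw' 1 x = x := rfl

lemma tw'_mono (k : ℕ) {x y : ℕ} (h : x ≤ y) : tw' k x ≤ tw' k y := by
  unfold tw'
  induction (k - 1) with
  | zero => simpa using h
  | succ j ih => rw [Function.iterate_succ_apply', Function.iterate_succ_apply']
                 exact Nat.pow_le_pow_right (by norm_num) ih

lemma le_tw' (k x : ℕ) : x ≤ tw' k x := by
  unfold tw'
  induction (k - 1) with
  | zero => simp
  | succ j ih =>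
    rw [Function.iterate_succ_apply']
    calc x ≤ (fun y => 2 ^ y)^[j] x := ih
      _ ≤ 2 ^ (fun y => 2 ^ y)^[j] x := Nat.le_of_lt (Nat.lt_two_pow_self (n := _))

lemma tw'_add (b : ℕ) : ∀ k, 1 ≤ k → ∀ x, tw' k x + b ≤ tw' k (x + b) := by
  intro k hk
  induction k, hk using Nat.le_induction with
  | base => intro x; simp [tw'_one]
  | succ k hk ih =>
    intro x
    rw [tw'_succ k x hk, tw'_succ k (x + b) hk]
    calc 2 ^ tw' k x + b ≤ 2 ^ tw' k x * 2 ^ b := by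
          have hb : b + 1 ≤ 2 ^ b := Nat.lt_two_pow_self (n := b)
          have h1 : 1 ≤ 2 ^ tw' k x := Nat.one_le_two_pow
          calc 2 ^ tw' k x + b ≤ 2 ^ tw' k x + 2 ^ tw' k x * b := by
                have := Nat.mul_le_mul h1 (le_refl b); omega
            _ = 2 ^ tw' k x * (b + 1) := by ring
            _ ≤ 2 ^ tw' k x * 2 ^ b := Nat.mul_le_mul_left _ hb
      _ = 2 ^ (tw' k x + b) := by rw [pow_add]
      _ ≤ 2 ^ tw' k (x + b) := Nat.pow_le_pow_right (by norm_num) (ih x)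

lemma tw'_mul (a : ℕ) (ha : 2 ≤ a) : ∀ k, 1 ≤ k → ∀ x, 2 ≤ x →
    a * tw' k x ≤ tw' k (a * x) := by
  intro k hk
  induction k, hk using Nat.le_induction with
  | base => intro x _; simp [tw'_one]
  | succ k hk ih =>
    intro x hx
    rw [tw'_succ k x hk, tw'_succ k (a * x) hk]
    have key : a + tw' k x ≤ tw' k (a * x) := by
      have h1 : tw' k x + a ≤ tw' k (x + a) := tw'_add a k hk x
      have h2 : x + a ≤ a * x := by nlinarith
      have := tw'_mono k h2
      omega
    calc a * 2 ^ tw' k x ≤ 2 ^ a * 2 ^ tw' k x :=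
          Nat.mul_le_mul_right _ (Nat.le_of_lt (Nat.lt_two_pow_self (n := a)))
      _ = 2 ^ (a + tw' k x) := by rw [pow_add]
      _ ≤ 2 ^ tw' k (a * x) := Nat.pow_le_pow_right (by norm_num) key

lemma tw'_pow (k : ℕ) (hk : 1 ≤ k) (x : ℕ) (hx : 2 ≤ x) :
    tw' k x ^ k ≤ tw' k (k * x) := by
  match k with
  | 1 => simpa [tw'_one] using le_refl x
  | (j + 2) =>
    have hj : 1 ≤ j + 1 := by omega
    rw [tw'_succ (j+1) x hj, tw'_succ (j+1) ((j+2) * x) hj, ← pow_mul]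
    apply Nat.pow_le_pow_right (by norm_num)
    have := tw'_mul (j + 2) (by omega) (j + 1) hj x hx
    calc tw' (j+1) x * (j+2) = (j+2) * tw' (j+1) x := by ring
      _ ≤ tw' (j+1) ((j+2) * x) := this

lemma RB_succ_eq (s r n : ℕ) (hr : 1 ≤ r) :
    RB s (r + 1) n = G s r 0 (RB s r n + 1) := by
  match r with
  | q + 1 => rfl

lemma RB_le (s : ℕ) (hs : 1 ≤ s) :
    ∀ r, 1 ≤ r → ∃ C, 2 ≤ C ∧ ∀ n, 1 ≤ n → RB s r n ≤ tw' r (C * n) := by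
  intro r hr
  induction r, hr using Nat.le_induction with
  | base =>
    refine ⟨s + 2, by omega, fun n hn => ?_⟩
    show s * n ≤ tw' 1 ((s + 2) * n)
    rw [tw'_one]
    exact Nat.mul_le_mul_right _ (by omega)
  | succ r hr ih =>
    obtain ⟨C, hC, hRB⟩ := ih
    refine ⟨(s + 1) * 2 ^ r * r * C, ?_, fun n hn => ?_⟩
    · have h1 : 1 ≤ 2 ^ r := Nat.one_le_two_pow
      have : 1*1*1*2 ≤ (s+1) * 2^r * r * C := by
        apply Nat.mul_le_mul
        apply Nat.mul_le_mul
        apply Nat.mul_le_mul <;> omega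
        all_goals omega
      omega
    set R := RB s r n with hR
    set t := tw' r (C * n) with ht
    have hRt : R ≤ t := hRB n hn
    have hCn : 2 ≤ C * n := by nlinarith
    have h2t : 2 ≤ t := le_trans hCn (le_tw' r (C * n))
    have e1 : RB s (r + 1) n ≤ (2 * s) ^ ((R + 1) ^ r) := by
      rw [RB_succ_eq s r n hr]
      calc G s r 0 (R + 1) ≤ (2*s) ^ ((0 + (R+1)) ^ (r-1) * (R+1)) := G_le s hs r (R+1) 0
        _ = (2*s) ^ ((R+1) ^ r) := by
            rw [Nat.zero_add, ← Nat.pow_succ]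
            congr 2
            omega
    have e2 : (R + 1) ^ r ≤ 2 ^ r * t ^ r := by
      calc (R + 1) ^ r ≤ (2 * t) ^ r := Nat.pow_le_pow_left (by omega) r
        _ = 2 ^ r * t ^ r := Nat.mul_pow _ _ _
    have e3 : t ^ r ≤ tw' r (r * (C * n)) := tw'_pow r hr (C * n) hCn
    have e4 : (2 * s) ^ ((R+1)^r) ≤ 2 ^ ((s + 1) * ((R+1)^r)) := by
      calc (2 * s) ^ ((R+1)^r) ≤ (2 ^ (s+1)) ^ ((R+1)^r) := by
            apply Nat.pow_le_pow_left
            have : s < 2 ^ s := Nat.lt_two_pow_self (n := s)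
            calc 2 * s ≤ 2 * 2 ^ s := by omega
              _ = 2 ^ (s + 1) := by rw [pow_succ]; ring
        _ = 2 ^ ((s+1) * ((R+1)^r)) := by rw [← pow_mul]
    have e5 : (s + 1) * ((R+1)^r) ≤ (s+1) * 2 ^ r * tw' r (r * (C * n)) := by
      calc (s + 1) * ((R+1)^r) ≤ (s+1) * (2 ^ r * t ^ r) := Nat.mul_le_mul_left _ e2
        _ = (s+1) * 2 ^ r * t ^ r := by ring
        _ ≤ (s+1) * 2 ^ r * tw' r (r * (C * n)) := Nat.mul_le_mul_left _ e3
    have e6 : (s+1) * 2 ^ r * tw' r (r * (C * n)) ≤ tw' r ((s + 1) * 2 ^ r * r * C * n) := by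
      have ha : 2 ≤ (s + 1) * 2 ^ r := by
        have h1 : 2 ≤ 2 ^ r := by
          calc 2 = 2 ^ 1 := rfl
            _ ≤ 2 ^ r := Nat.pow_le_pow_right (by norm_num) hr
        nlinarith
      have hx : 2 ≤ r * (C * n) := by nlinarith
      have := tw'_mul ((s+1) * 2 ^ r) ha r hr (r * (C * n)) hx
      calc (s+1) * 2 ^ r * tw' r (r * (C * n)) ≤ tw' r ((s+1) * 2 ^ r * (r * (C * n))) := this
        _ = tw' r ((s + 1) * 2 ^ r * r * C * n) := by ring_nf
    calc RB s (r + 1) n ≤ (2 * s) ^ ((R + 1) ^ r) := e1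
      _ ≤ 2 ^ ((s + 1) * ((R+1)^r)) := e4
      _ ≤ 2 ^ tw' r ((s + 1) * 2 ^ r * r * C * n) :=
          Nat.pow_le_pow_right (by norm_num) (le_trans e5 e6)
      _ = tw' (r + 1) ((s + 1) * 2 ^ r * r * C * n) := (tw'_succ r _ hr).symm

/-- Quantitative Ramsey theorem of Erdős and Rado: for constants `r ≥ 2` and
`s ≥ 1` there is a constant `C` such that for every `n` there exists
`N ≤ tw r (C * n)` such that every `s`-coloring of the `r`-subsets of an
`N`-element set admits a monochromatic subset of size `n`. -/
theorem stmt_17 (r s : ℕ) (hr : 2 ≤ r) (hs : 1 ≤ s) :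
    ∃ C : ℕ, ∀ n : ℕ, ∃ N : ℕ, N ≤ tw r (C * n) ∧
      ∀ χ : Finset (Fin N) → Fin s,
        ∃ T : Finset (Fin N), n ≤ T.card ∧
          ∃ color : Fin s, ∀ f ⊆ T, f.card = r → χ f = color := by
  have htw : ∀ k x, tw k x = tw' k x := fun _ _ => rfl
  have hr1 : 1 ≤ r := by omega
  obtain ⟨C, hC2, hCle⟩ := RB_le s hs r hr1
  refine ⟨C, fun n => ?_⟩
  rcases Nat.eq_zero_or_pos n with rfl | hn
  · refine ⟨0, Nat.zero_le _, fun χ => ⟨∅, le_refl _, ⟨0, hs⟩, fun f hf hc => ?_⟩⟩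
    have : f = ∅ := Finset.subset_empty.mp hf
    subst this
    simp at hc
    omega
  · set N := RB s r n with hN
    refine ⟨N, by rw [htw]; exact hCle n hn, fun χ => ?_⟩
    set χ' : Finset ℕ → Fin s :=
      fun g => χ ((g.filter (· < N)).attachFin
        (fun m hm => (Finset.mem_filter.mp hm).2)) with hχ'
    obtain ⟨T, hTsub, hTcard, c, hT⟩ := ramseyIn_all s hs r hr1 n (Finset.range N) χ'
      (by rw [Finset.card_range])
    have hTN : ∀ m ∈ T, m < N := fun m hm => Finset.mem_range.mp (hTsub hm)
    refine ⟨T.attachFin hTN, by rw [Finset.card_attachFin]; exact hTcard, c, ?_⟩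
    intro f' hf' hc'
    set f := f'.image Fin.val with hf
    have hfT : f ⊆ T := by
      intro x hx
      rw [hf, Finset.mem_image] at hx
      obtain ⟨i, hi, rfl⟩ := hx
      exact (Finset.mem_attachFin hTN).mp (hf' hi)
    have hfcard : f.card = r := by
      rw [hf, Finset.card_image_of_injective _ Fin.val_injective, hc']
    have := hT f hfT hfcard
    rw [hχ'] at this
    convert this using 2
    have hfilter : f.filter (· < N) = f := by
      apply Finset.filter_true_of_mem
      intro x hx
      exact Finset.mem_range.mp (hTsub (hfT hx))
    ext i
    rw [Finset.mem_attachFin]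
    simp only [hfilter]
    rw [hf, Finset.mem_image]
    constructor
    · intro hi
      exact ⟨i, hi, rfl⟩
    · rintro ⟨j, hj, hji⟩
      rwa [← Fin.val_injective hji]
end
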